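/- arXiv:1806.09122 — 6 statements merged into one kernel-verified Lean document; each statement's English description precedes it below -/
import Mathlib

section
/- Let (H, ∘) be a semi-hypergroup and let R and S be strongly regular equivalence relations on H. Then the transitive closure (R ∪ S)* of the union R ∪ S is a strongly regular relation on H. -/
/-- A hyperoperation on `H`: every pair maps to a nonempty subset. -/
structure Hyperop (H : Type*) where
  op : H → H → Set H
  op_nonempty : ∀ x y, (op x y).Nonempty

namespace Hyperop

variable {H : Type*}

/-- Extension of the hyperoperation to subsets. -/
def sop (h : Hyperop H) (A B : Set H) : Set H := ⋃ a ∈ A, ⋃ b ∈ B, h.op a b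

/-- Associativity of a hyperoperation (on sets). -/
def IsAssoc (h : Hyperop H) : Prop :=
  ∀ x y z : H, h.sop (h.op x y) {z} = h.sop {x} (h.op y z)

/-- Reproduction axiom: `x ∘ H = H ∘ x = H`. -/
def IsReproductive (h : Hyperop H) : Prop :=
  ∀ x y : H, (∃ u, y ∈ h.op x u) ∧ (∃ v, y ∈ h.op v x)

/-- A relation `T` is strongly regular (on both sides) w.r.t. `h`. -/
def StronglyRegular (h : Hyperop H) (T : H → H → Prop) : Prop :=
  ∀ x y, T x y → ∀ a : H,
    (∀ u ∈ h.op a x, ∀ v ∈ h.op a y, T u v) ∧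
    (∀ u ∈ h.op x a, ∀ v ∈ h.op y a, T u v)

/-- `h.foldl x l` : the set `x ∘ l₁ ∘ ⋯ ∘ lₖ`. -/
def foldl (h : Hyperop H) : H → List H → Set H
  | x, [] => {x}
  | x, y :: l => ⋃ z ∈ h.op x y, h.foldl z l

/-- Hyper-"product" of a nonempty list of elements (empty list gives `∅`). -/
def listProd (h : Hyperop H) : List H → Set H
  | [] => ∅
  | x :: l => h.foldl x l

/-- Fold a list of subsets onto a subset. -/
def setFold (h : Hyperop H) : Set H → List (Set H) → Set H
  | A, [] => A
  | A, B :: l => h.setFold (h.sop A B) l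

end Hyperop

/-- `l'` is obtained from `l` by inserting one consecutive block of copies of `e`
(or is equal to `l`). -/
def InsertBlock {α : Type*} (e : α) (l l' : List α) : Prop :=
  l' = l ∨ ∃ (p q : List α) (k : ℕ), 1 ≤ k ∧ l = p ++ q ∧ l' = p ++ List.replicate k e ++ q

/-- A hyperring: `(R, +)` a hypergroup, `(R, ·)` a semi-hypergroup,
with two-sided distributivity. -/
structure Hyperring (R : Type*) where
  add : Hyperop R
  mul : Hyperop R
  add_assoc : add.IsAssoc
  add_repro : add.IsReproductive
  mul_assoc : mul.IsAssoc
  left_distrib : ∀ x y z : R, mul.sop {x} (add.op y z) = add.sop (mul.op x y) (mul.op x z)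
  right_distrib : ∀ x y z : R, mul.sop (add.op y z) {x} = add.sop (mul.op y x) (mul.op z x)

namespace Hyperring

variable {R : Type*}

/-- Sum of products: `ll` is a list of lists; each inner list is multiplied,
the results are added up. -/
def SOP (S : Hyperring R) : List (List R) → Set R
  | [] => ∅
  | l :: t => S.add.setFold (S.mul.listProd l) (t.map S.mul.listProd)

/-- A valid sum-of-products expression: nonempty list of nonempty lists. -/
def ValidExpr (S : Hyperring R) (ll : List (List R)) : Prop :=
  ll ≠ [] ∧ ∀ l ∈ ll, l ≠ []

/-- The Vougiouklis relation `Γ`. -/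
def gamma (S : Hyperring R) (x y : R) : Prop :=
  ∃ ll, S.ValidExpr ll ∧ x ∈ S.SOP ll ∧ y ∈ S.SOP ll

/-- The relation `α₊` : permuting the summands. -/
def alphaPlus (S : Hyperring R) (x y : R) : Prop :=
  ∃ ll ll', S.ValidExpr ll ∧ ll.Perm ll' ∧ x ∈ S.SOP ll ∧ y ∈ S.SOP ll'

/-- The relation `α×` : permuting the factors inside each product. -/
def alphaTimes (S : Hyperring R) (x y : R) : Prop :=
  ∃ ll ll', S.ValidExpr ll ∧ List.Forall₂ List.Perm ll ll' ∧ x ∈ S.SOP ll ∧ y ∈ S.SOP ll'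

/-- The Davvaz–Vougiouklis relation `α` : permuting factors inside each
product and then permuting the summands. -/
def alpha (S : Hyperring R) (x y : R) : Prop :=
  ∃ ll mid ll', S.ValidExpr ll ∧ List.Forall₂ List.Perm ll mid ∧ mid.Perm ll' ∧
    x ∈ S.SOP ll ∧ y ∈ S.SOP ll'

/-- Condition `𝔓ₑ` : each product of the second expression is obtained from the
corresponding product of the first by inserting a block of copies of `e`. -/
def CondP (S : Hyperring R) (e : R) (ll ll' : List (List R)) : Prop :=
  List.Forall₂ (InsertBlock e) ll ll'

/-- The relation `(λ^e_×)ₘ`. -/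
def lamTimesN (S : Hyperring R) (e : R) (m : ℕ) (x y : R) : Prop :=
  ∃ ll ll', ll.length = m ∧ S.ValidExpr ll ∧ S.CondP e ll ll' ∧
    ((x ∈ S.SOP ll ∧ y ∈ S.SOP ll') ∨ (x ∈ S.SOP ll' ∧ y ∈ S.SOP ll))

/-- The relation `λ^e_×`. -/
def lamTimes (S : Hyperring R) (e : R) (x y : R) : Prop :=
  ∃ m, 1 ≤ m ∧ S.lamTimesN e m x y

/-- The relation `λₑ = λ^e_× ∪ α₊`. -/
def lam (S : Hyperring R) (e : R) (x y : R) : Prop :=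
  S.lamTimes e x y ∨ S.alphaPlus x y

/-- The relation `Λₑ = λ^e_× ∪ α`. -/
def Lam (S : Hyperring R) (e : R) (x y : R) : Prop :=
  S.lamTimes e x y ∨ S.alpha x y

/-- `M` is a `λₑ`-part. -/
def IsLamPart (S : Hyperring R) (e : R) (M : Set R) : Prop :=
  (∀ ll ll', S.ValidExpr ll → ll.Perm ll' → (S.SOP ll ∩ M).Nonempty → S.SOP ll' ⊆ M) ∧
  (∀ ll ll', S.ValidExpr ll → (S.CondP e ll ll' ∨ S.CondP e ll' ll) →
      (S.SOP ll ∩ M).Nonempty → S.SOP ll' ⊆ M)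

/-- A `λₑ`-strong hyperring. -/
def LamStrong (S : Hyperring R) (e : R) : Prop :=
  (∀ x y, Relation.TransGen (S.lam e) x y →
      (S.mul.op x e ∩ S.mul.op y e).Nonempty ∧ (S.mul.op e x ∩ S.mul.op e y).Nonempty) ∧
  (∀ x z, z ∈ S.mul.op x e → x ∈ S.mul.op z e) ∧
  (∀ x z, z ∈ S.mul.op e x → x ∈ S.mul.op e z)

end Hyperring

/-- the transitive closure of the union of two strongly regular
equivalence relations on a semi-hypergroup is strongly regular. -/
theorem stmt0 {H : Type*} (h : Hyperop H) (hassoc : h.IsAssoc)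
    (Rr Sr : H → H → Prop) (hR : Equivalence Rr) (hS : Equivalence Sr)
    (hRreg : h.StronglyRegular Rr) (hSreg : h.StronglyRegular Sr) :
    h.StronglyRegular (Relation.TransGen (fun a b => Rr a b ∨ Sr a b)) := by
  intro x y hxy a
  induction hxy with
  | single hst =>
    rename_i b
    constructor
    · intro u hu v hv
      exact Relation.TransGen.single (hst.elim
        (fun hr => Or.inl ((hRreg x b hr a).1 u hu v hv))
        (fun hs => Or.inr ((hSreg x b hs a).1 u hu v hv)))
    · intro u hu v hv
      exact Relation.TransGen.single (hst.elim
        (fun hr => Or.inl ((hRreg x b hr a).2 u hu v hv))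
        (fun hs => Or.inr ((hSreg x b hs a).2 u hu v hv)))
  | tail hxb hbc ih =>
    rename_i b c
    obtain ⟨w1, hw1⟩ := h.op_nonempty a b
    obtain ⟨w2, hw2⟩ := h.op_nonempty b a
    constructor
    · intro u hu v hv
      refine (ih.1 u hu w1 hw1).trans (Relation.TransGen.single ?_)
      exact hbc.elim
        (fun hr => Or.inl ((hRreg b c hr a).1 w1 hw1 v hv))
        (fun hs => Or.inr ((hSreg b c hs a).1 w1 hw1 v hv))
    · intro u hu v hv
      refine (ih.2 u hu w2 hw2).trans (Relation.TransGen.single ?_)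
      exact hbc.elim
        (fun hr => Or.inl ((hRreg b c hr a).2 w2 hw2 v hv))
        (fun hs => Or.inr ((hSreg b c hs a).2 w2 hw2 v hv))
end

section
/- Let (R, +, ·) be a hyperring. Define x Γ y iff there exist n ∈ ℕ, kᵢ ∈ ℕ, and elements x_{ij} ∈ R such that {x, y} ⊆ Σᵢ₌₁ⁿ Πⱼ₌₁^{kᵢ} x_{ij}. Then the transitive closure Γ* of Γ is a strongly regular equivalence relation on both (R, +) and (R, ·). -/
/-! ### Auxiliary lemmas -/

namespace Hyperop

variable {H : Type*} (h : Hyperop H)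

lemma mem_sop {A B : Set H} {u : H} :
    u ∈ h.sop A B ↔ ∃ a ∈ A, ∃ b ∈ B, u ∈ h.op a b := by
  simp [sop]

lemma sop_assoc (ha : h.IsAssoc) (A B C : Set H) :
    h.sop (h.sop A B) C = h.sop A (h.sop B C) := by
  have key : ∀ x y z u, (∃ w ∈ h.op x y, u ∈ h.op w z) ↔ (∃ w ∈ h.op y z, u ∈ h.op x w) := by
    intro x y z u
    have := ha x y z
    have h1 : u ∈ h.sop (h.op x y) {z} ↔ u ∈ h.sop {x} (h.op y z) := by rw [this]
    simpa [mem_sop] using h1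
  ext u
  simp only [mem_sop]
  constructor
  · rintro ⟨w, ⟨a, haA, b, hbB, hw⟩, c, hcC, hu⟩
    obtain ⟨w', hw', hu'⟩ := (key a b c u).1 ⟨w, hw, hu⟩
    exact ⟨a, haA, w', ⟨b, hbB, c, hcC, hw'⟩, hu'⟩
  · rintro ⟨a, haA, w, ⟨b, hbB, c, hcC, hw⟩, hu⟩
    obtain ⟨w', hw', hu'⟩ := (key a b c u).2 ⟨w, hw, hu⟩
    exact ⟨w', ⟨a, haA, b, hbB, hw'⟩, c, hcC, hu'⟩

lemma sop_singleton_singleton (x y : H) : h.sop {x} {y} = h.op x y := by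
  ext u; simp [mem_sop]

lemma mem_sop_singleton_left {x : H} {B : Set H} {u : H} :
    u ∈ h.sop {x} B ↔ ∃ b ∈ B, u ∈ h.op x b := by
  simp [mem_sop]

lemma mem_sop_singleton_right {B : Set H} {x u : H} :
    u ∈ h.sop B {x} ↔ ∃ b ∈ B, u ∈ h.op b x := by
  simp [mem_sop]

lemma setFold_sop (ha : h.IsAssoc) (A B : Set H) (l : List (Set H)) :
    h.setFold (h.sop A B) l = h.sop A (h.setFold B l) := by
  induction l generalizing B with
  | nil => rfl
  | cons C t ih =>
    show h.setFold (h.sop (h.sop A B) C) t = h.sop A (h.setFold (h.sop B C) t)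
    rw [h.sop_assoc ha, ih]

lemma setFold_append_single (A : Set H) (l : List (Set H)) (B : Set H) :
    h.setFold A (l ++ [B]) = h.sop (h.setFold A l) B := by
  induction l generalizing A with
  | nil => rfl
  | cons C t ih =>
    show h.setFold (h.sop A C) (t ++ [B]) = _
    rw [ih]; rfl

lemma foldl_cons_eq (ha : h.IsAssoc) (a y : H) (l : List H) :
    h.foldl a (y :: l) = h.sop {a} (h.foldl y l) := by
  induction l generalizing a y with
  | nil =>
    show (⋃ z ∈ h.op a y, ({z} : Set H)) = h.sop {a} {y}
    ext u; simp [mem_sop]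
  | cons w t ih =>
    show (⋃ z ∈ h.op a y, h.foldl z (w :: t)) = _
    have : (⋃ z ∈ h.op a y, h.foldl z (w :: t))
        = ⋃ z ∈ h.op a y, h.sop {z} (h.foldl w t) := by
      refine Set.iUnion₂_congr fun z _ => ih z w
    rw [this, ih y w, ← h.sop_assoc ha, h.sop_singleton_singleton]
    ext u
    simp only [Set.mem_iUnion, mem_sop, mem_sop_singleton_left, Set.mem_singleton_iff]
    constructor
    · rintro ⟨z, hz, b, rfl, c, hc, hu⟩
      exact ⟨b, hz, c, hc, hu⟩
    · rintro ⟨z, hz, c, hc, hu⟩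
      exact ⟨z, hz, z, rfl, c, hc, hu⟩

lemma foldl_append_single (x : H) (l : List H) (a : H) :
    h.foldl x (l ++ [a]) = h.sop (h.foldl x l) {a} := by
  induction l generalizing x with
  | nil =>
    show (⋃ z ∈ h.op x a, ({z} : Set H)) = h.sop {x} {a}
    ext u; simp [mem_sop]
  | cons w t ih =>
    show (⋃ z ∈ h.op x w, h.foldl z (t ++ [a])) = h.sop (⋃ z ∈ h.op x w, h.foldl z t) {a}
    ext u
    simp only [Set.mem_iUnion, mem_sop_singleton_right]
    constructor
    · rintro ⟨z, hz, hu⟩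
      rw [ih z] at hu
      obtain ⟨b, hb, hu⟩ := h.mem_sop_singleton_right.1 hu
      exact ⟨b, ⟨z, hz, hb⟩, hu⟩
    · rintro ⟨b, ⟨z, hz, hb⟩, hu⟩
      exact ⟨z, hz, by rw [ih z]; exact h.mem_sop_singleton_right.2 ⟨b, hb, hu⟩⟩

end Hyperop

namespace Hyperring

variable {R : Type*} (S : Hyperring R)

lemma listProd_singleton (a : R) : S.mul.listProd [a] = {a} := rfl

lemma SOP_single (l : List R) : S.SOP [l] = S.mul.listProd l := rfl

lemma SOP_cons (l : List R) (t : List (List R)) (ht : t ≠ []) :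
    S.SOP (l :: t) = S.add.sop (S.mul.listProd l) (S.SOP t) := by
  obtain ⟨l', t', rfl⟩ := List.exists_cons_of_ne_nil ht
  show S.add.setFold (S.mul.listProd l)
      (S.mul.listProd l' :: t'.map S.mul.listProd) = _
  show S.add.setFold (S.add.sop (S.mul.listProd l) (S.mul.listProd l'))
      (t'.map S.mul.listProd) = _
  rw [S.add.setFold_sop S.add_assoc]
  rfl

lemma SOP_append_single (ll : List (List R)) (hll : ll ≠ []) (a : R) :
    S.SOP (ll ++ [[a]]) = S.add.sop (S.SOP ll) {a} := by
  obtain ⟨l, t, rfl⟩ := List.exists_cons_of_ne_nil hll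
  show S.add.setFold (S.mul.listProd l) ((t ++ [[a]]).map S.mul.listProd) = _
  rw [List.map_append, List.map_cons, List.map_nil, S.add.setFold_append_single]
  rfl

lemma listProd_cons (a : R) (l : List R) (hl : l ≠ []) :
    S.mul.listProd (a :: l) = S.mul.sop {a} (S.mul.listProd l) := by
  obtain ⟨y, t, rfl⟩ := List.exists_cons_of_ne_nil hl
  exact S.mul.foldl_cons_eq S.mul_assoc a y t

lemma listProd_append_single (l : List R) (hl : l ≠ []) (a : R) :
    S.mul.listProd (l ++ [a]) = S.mul.sop (S.mul.listProd l) {a} := by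
  obtain ⟨y, t, rfl⟩ := List.exists_cons_of_ne_nil hl
  exact S.mul.foldl_append_single y t a

lemma left_distrib_set (a : R) (A B : Set R) :
    S.mul.sop {a} (S.add.sop A B) = S.add.sop (S.mul.sop {a} A) (S.mul.sop {a} B) := by
  have key : ∀ y z u, (∃ w ∈ S.add.op y z, u ∈ S.mul.op a w) ↔
      (∃ s ∈ S.mul.op a y, ∃ t ∈ S.mul.op a z, u ∈ S.add.op s t) := by
    intro y z u
    have h1 : u ∈ S.mul.sop {a} (S.add.op y z)
        ↔ u ∈ S.add.sop (S.mul.op a y) (S.mul.op a z) := by rw [S.left_distrib a y z]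
    simpa [Hyperop.mem_sop] using h1
  ext u
  constructor
  · intro hu
    obtain ⟨w, hw, hu⟩ := S.mul.mem_sop_singleton_left.1 hu
    obtain ⟨y, hy, z, hz, hw⟩ := S.add.mem_sop.1 hw
    obtain ⟨s, hs, t, ht, hu'⟩ := (key y z u).1 ⟨w, hw, hu⟩
    exact S.add.mem_sop.2 ⟨s, S.mul.mem_sop_singleton_left.2 ⟨y, hy, hs⟩,
      t, S.mul.mem_sop_singleton_left.2 ⟨z, hz, ht⟩, hu'⟩
  · intro hu
    obtain ⟨s, hs, t, ht, hu⟩ := S.add.mem_sop.1 hu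
    obtain ⟨y, hy, hs⟩ := S.mul.mem_sop_singleton_left.1 hs
    obtain ⟨z, hz, ht⟩ := S.mul.mem_sop_singleton_left.1 ht
    obtain ⟨w, hw, hu'⟩ := (key y z u).2 ⟨s, hs, t, ht, hu⟩
    exact S.mul.mem_sop_singleton_left.2 ⟨w, S.add.mem_sop.2 ⟨y, hy, z, hz, hw⟩, hu'⟩

lemma right_distrib_set (a : R) (A B : Set R) :
    S.mul.sop (S.add.sop A B) {a} = S.add.sop (S.mul.sop A {a}) (S.mul.sop B {a}) := by
  have key : ∀ y z u, (∃ w ∈ S.add.op y z, u ∈ S.mul.op w a) ↔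
      (∃ s ∈ S.mul.op y a, ∃ t ∈ S.mul.op z a, u ∈ S.add.op s t) := by
    intro y z u
    have h1 : u ∈ S.mul.sop (S.add.op y z) {a}
        ↔ u ∈ S.add.sop (S.mul.op y a) (S.mul.op z a) := by rw [S.right_distrib a y z]
    simpa [Hyperop.mem_sop] using h1
  ext u
  constructor
  · intro hu
    obtain ⟨w, hw, hu⟩ := S.mul.mem_sop_singleton_right.1 hu
    obtain ⟨y, hy, z, hz, hw⟩ := S.add.mem_sop.1 hw
    obtain ⟨s, hs, t, ht, hu'⟩ := (key y z u).1 ⟨w, hw, hu⟩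
    exact S.add.mem_sop.2 ⟨s, S.mul.mem_sop_singleton_right.2 ⟨y, hy, hs⟩,
      t, S.mul.mem_sop_singleton_right.2 ⟨z, hz, ht⟩, hu'⟩
  · intro hu
    obtain ⟨s, hs, t, ht, hu⟩ := S.add.mem_sop.1 hu
    obtain ⟨y, hy, hs⟩ := S.mul.mem_sop_singleton_right.1 hs
    obtain ⟨z, hz, ht⟩ := S.mul.mem_sop_singleton_right.1 ht
    obtain ⟨w, hw, hu'⟩ := (key y z u).2 ⟨s, hs, t, ht, hu⟩
    exact S.mul.mem_sop_singleton_right.2 ⟨w, S.add.mem_sop.2 ⟨y, hy, z, hz, hw⟩, hu'⟩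

lemma SOP_mul_left (a : R) (ll : List (List R)) (hv : S.ValidExpr ll) :
    S.mul.sop {a} (S.SOP ll) = S.SOP (ll.map (a :: ·)) := by
  induction ll with
  | nil => exact absurd rfl hv.1
  | cons l t ih =>
    have hl : l ≠ [] := hv.2 l (by simp)
    rcases eq_or_ne t [] with rfl | ht
    · show S.mul.sop {a} (S.mul.listProd l) = S.mul.listProd (a :: l)
      rw [S.listProd_cons a l hl]
    · have hvt : S.ValidExpr t := ⟨ht, fun l' hl' => hv.2 l' (by simp [hl'])⟩
      have htm : t.map (a :: ·) ≠ [] := by simpa using ht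
      rw [List.map_cons, S.SOP_cons l t ht, S.SOP_cons (a :: l) _ htm,
        S.left_distrib_set, S.listProd_cons a l hl, ih hvt]

lemma SOP_mul_right (a : R) (ll : List (List R)) (hv : S.ValidExpr ll) :
    S.mul.sop (S.SOP ll) {a} = S.SOP (ll.map (· ++ [a])) := by
  induction ll with
  | nil => exact absurd rfl hv.1
  | cons l t ih =>
    have hl : l ≠ [] := hv.2 l (by simp)
    rcases eq_or_ne t [] with rfl | ht
    · show S.mul.sop (S.mul.listProd l) {a} = S.mul.listProd (l ++ [a])
      rw [S.listProd_append_single l hl]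
    · have hvt : S.ValidExpr t := ⟨ht, fun l' hl' => hv.2 l' (by simp [hl'])⟩
      have htm : t.map (· ++ [a]) ≠ [] := by simpa using ht
      rw [List.map_cons, S.SOP_cons l t ht, S.SOP_cons (l ++ [a]) _ htm,
        S.right_distrib_set, S.listProd_append_single l hl, ih hvt]

lemma gamma_refl (x : R) : S.gamma x x := by
  refine ⟨[[x]], ⟨by simp, by simp⟩, ?_, ?_⟩ <;> exact rfl

lemma gamma_symm {x y : R} (h : S.gamma x y) : S.gamma y x := by
  obtain ⟨ll, hv, hx, hy⟩ := h
  exact ⟨ll, hv, hy, hx⟩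

lemma gamma_add_left {x y : R} (h : S.gamma x y) (a : R) :
    ∀ u ∈ S.add.op a x, ∀ v ∈ S.add.op a y, S.gamma u v := by
  obtain ⟨ll, hv, hx, hy⟩ := h
  intro u hu v hv'
  have hval : S.ValidExpr ([a] :: ll) := by
    refine ⟨by simp, fun l hl => ?_⟩
    rcases List.mem_cons.1 hl with rfl | hl
    · simp
    · exact hv.2 l hl
  have heq : S.SOP ([a] :: ll) = S.add.sop {a} (S.SOP ll) := by
    rw [S.SOP_cons [a] ll hv.1, S.listProd_singleton]
  refine ⟨[a] :: ll, hval, ?_, ?_⟩ <;> rw [heq]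
  · exact Hyperop.mem_sop _ |>.2 ⟨a, rfl, x, hx, hu⟩
  · exact Hyperop.mem_sop _ |>.2 ⟨a, rfl, y, hy, hv'⟩

lemma gamma_add_right {x y : R} (h : S.gamma x y) (a : R) :
    ∀ u ∈ S.add.op x a, ∀ v ∈ S.add.op y a, S.gamma u v := by
  obtain ⟨ll, hv, hx, hy⟩ := h
  intro u hu v hv'
  have hval : S.ValidExpr (ll ++ [[a]]) := by
    refine ⟨by simp, ?_⟩
    intro l hl
    rcases List.mem_append.1 hl with hl | hl
    · exact hv.2 l hl
    · simp at hl; simp [hl]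
  have heq := S.SOP_append_single ll hv.1 a
  refine ⟨ll ++ [[a]], hval, ?_, ?_⟩ <;> rw [heq]
  · exact Hyperop.mem_sop _ |>.2 ⟨x, hx, a, rfl, hu⟩
  · exact Hyperop.mem_sop _ |>.2 ⟨y, hy, a, rfl, hv'⟩

lemma gamma_mul_left {x y : R} (h : S.gamma x y) (a : R) :
    ∀ u ∈ S.mul.op a x, ∀ v ∈ S.mul.op a y, S.gamma u v := by
  obtain ⟨ll, hv, hx, hy⟩ := h
  intro u hu v hv'
  have hval : S.ValidExpr (ll.map (a :: ·)) := by
    refine ⟨by simpa using hv.1, ?_⟩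
    intro l hl
    obtain ⟨l', _, rfl⟩ := List.mem_map.1 hl
    simp
  have heq := S.SOP_mul_left a ll hv
  refine ⟨ll.map (a :: ·), hval, ?_, ?_⟩ <;> rw [← heq]
  · exact Hyperop.mem_sop _ |>.2 ⟨a, rfl, x, hx, hu⟩
  · exact Hyperop.mem_sop _ |>.2 ⟨a, rfl, y, hy, hv'⟩

lemma gamma_mul_right {x y : R} (h : S.gamma x y) (a : R) :
    ∀ u ∈ S.mul.op x a, ∀ v ∈ S.mul.op y a, S.gamma u v := by
  obtain ⟨ll, hv, hx, hy⟩ := h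
  intro u hu v hv'
  have hval : S.ValidExpr (ll.map (· ++ [a])) := by
    refine ⟨by simpa using hv.1, ?_⟩
    intro l hl
    obtain ⟨l', _, rfl⟩ := List.mem_map.1 hl
    simp
  have heq := S.SOP_mul_right a ll hv
  refine ⟨ll.map (· ++ [a]), hval, ?_, ?_⟩ <;> rw [← heq]
  · exact Hyperop.mem_sop _ |>.2 ⟨x, hx, a, rfl, hu⟩
  · exact Hyperop.mem_sop _ |>.2 ⟨y, hy, a, rfl, hv'⟩

end Hyperring

/-- Lift one-step strong regularity of `r` to its transitive closure. -/
lemma transGen_lift {α : Type*} {r : α → α → Prop} {f : α → Set α}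
    (hne : ∀ x, (f x).Nonempty)
    (hstep : ∀ x y, r x y → ∀ u ∈ f x, ∀ v ∈ f y, r u v) :
    ∀ x y, Relation.TransGen r x y → ∀ u ∈ f x, ∀ v ∈ f y, Relation.TransGen r u v := by
  intro x y hxy
  induction hxy with
  | single h =>
    intro u hu v hv
    exact Relation.TransGen.single (hstep _ _ h u hu v hv)
  | @tail b c _ h₂ ih =>
    intro u hu v hv
    obtain ⟨w, hw⟩ := hne b
    exact (ih u hu w hw).tail (hstep _ _ h₂ w hw v hv)

/-- `Γ*` is a strongly regular equivalence relation on both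
`(R, +)` and `(R, ·)`. -/
theorem stmt5 {R : Type*} (S : Hyperring R) :
    Equivalence (Relation.TransGen S.gamma) ∧
    S.add.StronglyRegular (Relation.TransGen S.gamma) ∧
    S.mul.StronglyRegular (Relation.TransGen S.gamma) := by
  refine ⟨⟨fun x => Relation.TransGen.single (S.gamma_refl x), ?_,
      fun h₁ h₂ => h₁.trans h₂⟩, ?_, ?_⟩
  · intro x y h
    induction h with
    | single h => exact Relation.TransGen.single (S.gamma_symm h)
    | tail _ h₂ ih => exact (Relation.TransGen.single (S.gamma_symm h₂)).trans ih
  · intro x y hT a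
    constructor
    · exact transGen_lift (f := fun z => S.add.op a z) (fun z => S.add.op_nonempty a z)
        (fun x y h => S.gamma_add_left h a) x y hT
    · exact transGen_lift (f := fun z => S.add.op z a) (fun z => S.add.op_nonempty z a)
        (fun x y h => S.gamma_add_right h a) x y hT
  · intro x y hT a
    constructor
    · exact transGen_lift (f := fun z => S.mul.op a z) (fun z => S.mul.op_nonempty a z)
        (fun x y h => S.gamma_mul_left h a) x y hT
    · exact transGen_lift (f := fun z => S.mul.op z a) (fun z => S.mul.op_nonempty z a)
        (fun x y h => S.gamma_mul_right h a) x y hT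
end

section
/- Let (R, +, ·) be a hyperring and e ∈ R. The relation λₑ* is the smallest equivalence relation on R such that the quotient R/λₑ* is a ring with identity λₑ*(e): if μ is any equivalence relation on R such that R/μ is a ring whose identity is the class μ(e), then λₑ* ⊆ μ. -/
/-- Value of a product in the quotient (with the class of `e` as seed). -/
def prodVal {R : Type*} (μ : Setoid R) (pmul : Quotient μ → Quotient μ → Quotient μ)
    (e : R) (l : List R) : Quotient μ :=
  (l.map (Quotient.mk μ)).foldl pmul (Quotient.mk μ e)

/-- Value of a sum of products in the quotient (with `z0` as seed). -/
def sumVal {R : Type*} (μ : Setoid R) (padd pmul : Quotient μ → Quotient μ → Quotient μ)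
    (z0 : Quotient μ) (e : R) (ll : List (List R)) : Quotient μ :=
  (ll.map (prodVal μ pmul e)).foldl padd z0

theorem foldl_spec {R : Type*} (S : Hyperring R) (μ : Setoid R)
    (pmul : Quotient μ → Quotient μ → Quotient μ)
    (hmul : ∀ x y : R, ∀ z ∈ S.mul.op x y,
      pmul (Quotient.mk μ x) (Quotient.mk μ y) = Quotient.mk μ z) :
    ∀ (l : List R) (x z : R), z ∈ S.mul.foldl x l →
      Quotient.mk μ z = List.foldl pmul (Quotient.mk μ x) (l.map (Quotient.mk μ)) := by
  intro l
  induction l with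
  | nil =>
      intro x z hz
      simp only [Hyperop.foldl, Set.mem_singleton_iff] at hz
      simp [hz]
  | cons y l ih =>
      intro x z hz
      simp only [Hyperop.foldl, Set.mem_iUnion, exists_prop] at hz
      obtain ⟨w, hw, hzw⟩ := hz
      rw [List.map_cons, List.foldl_cons, hmul x y w hw]
      exact ih w z hzw

theorem prod_spec {R : Type*} (S : Hyperring R) (μ : Setoid R)
    (pmul : Quotient μ → Quotient μ → Quotient μ) (e : R)
    (hmul : ∀ x y : R, ∀ z ∈ S.mul.op x y,
      pmul (Quotient.mk μ x) (Quotient.mk μ y) = Quotient.mk μ z)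
    (hone : ∀ a, pmul (Quotient.mk μ e) a = a) :
    ∀ (l : List R), l ≠ [] → ∀ z ∈ S.mul.listProd l,
      Quotient.mk μ z = prodVal μ pmul e l := by
  intro l
  cases l with
  | nil => intro h; exact absurd rfl h
  | cons x t =>
      intro _ z hz
      have := foldl_spec S μ pmul hmul t x z hz
      rw [this, prodVal, List.map_cons, List.foldl_cons, hone]

theorem setFold_spec {R : Type*} (S : Hyperring R) (μ : Setoid R)
    (padd : Quotient μ → Quotient μ → Quotient μ)
    (hadd : ∀ x y : R, ∀ z ∈ S.add.op x y,
      padd (Quotient.mk μ x) (Quotient.mk μ y) = Quotient.mk μ z) :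
    ∀ {Bs : List (Set R)} {qs : List (Quotient μ)},
      List.Forall₂ (fun B q => ∀ b ∈ B, Quotient.mk μ b = q) Bs qs →
      ∀ (A : Set R) (qa : Quotient μ), (∀ a ∈ A, Quotient.mk μ a = qa) →
      ∀ z ∈ S.add.setFold A Bs, Quotient.mk μ z = qs.foldl padd qa := by
  intro Bs qs h
  induction h with
  | nil => intro A qa hA z hz; exact hA z hz
  | @cons B q Bs qs hB _ ih =>
      intro A qa hA z hz
      refine ih (S.add.sop A B) (padd qa q) ?_ z hz
      intro c hc
      simp only [Hyperop.sop, Set.mem_iUnion, exists_prop] at hc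
      obtain ⟨a, ha, b, hb, hcab⟩ := hc
      rw [← hadd a b c hcab, hA a ha, hB b hb]

theorem forall₂_map_prod {R : Type*} (S : Hyperring R) (μ : Setoid R)
    (pmul : Quotient μ → Quotient μ → Quotient μ) (e : R)
    (hmul : ∀ x y : R, ∀ z ∈ S.mul.op x y,
      pmul (Quotient.mk μ x) (Quotient.mk μ y) = Quotient.mk μ z)
    (hone : ∀ a, pmul (Quotient.mk μ e) a = a) :
    ∀ (t : List (List R)), (∀ l ∈ t, l ≠ []) →
      List.Forall₂ (fun B q => ∀ b ∈ B, Quotient.mk μ b = q)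
        (t.map S.mul.listProd) (t.map (prodVal μ pmul e)) := by
  intro t
  induction t with
  | nil => intro _; exact List.Forall₂.nil
  | cons l t ih =>
      intro h
      refine List.Forall₂.cons ?_ (ih (fun l' hl' => h l' (List.mem_cons_of_mem _ hl')))
      exact fun b hb => prod_spec S μ pmul e hmul hone l (h l List.mem_cons_self) b hb

theorem SOP_spec {R : Type*} (S : Hyperring R) (μ : Setoid R)
    (padd pmul : Quotient μ → Quotient μ → Quotient μ) (e : R) (z0 : Quotient μ)
    (hadd : ∀ x y : R, ∀ z ∈ S.add.op x y,
      padd (Quotient.mk μ x) (Quotient.mk μ y) = Quotient.mk μ z)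
    (hmul : ∀ x y : R, ∀ z ∈ S.mul.op x y,
      pmul (Quotient.mk μ x) (Quotient.mk μ y) = Quotient.mk μ z)
    (hone : ∀ a, pmul (Quotient.mk μ e) a = a)
    (hz0 : ∀ a, padd z0 a = a) :
    ∀ (ll : List (List R)), S.ValidExpr ll → ∀ z ∈ S.SOP ll,
      Quotient.mk μ z = sumVal μ padd pmul z0 e ll := by
  intro ll
  cases ll with
  | nil => intro hv; exact absurd rfl hv.1
  | cons l t =>
      intro hv z hz
      have hmem : ∀ l' ∈ t, l' ≠ [] := fun l' hl' => hv.2 l' (List.mem_cons_of_mem _ hl')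
      have := setFold_spec S μ padd hadd
        (forall₂_map_prod S μ pmul e hmul hone t hmem)
        (S.mul.listProd l) (prodVal μ pmul e l)
        (prod_spec S μ pmul e hmul hone l (hv.2 l List.mem_cons_self)) z hz
      rw [this, sumVal, List.map_cons, List.foldl_cons, hz0]

theorem prod_insertBlock {R : Type*} (μ : Setoid R)
    (pmul : Quotient μ → Quotient μ → Quotient μ) (e : R)
    (honer : ∀ a, pmul a (Quotient.mk μ e) = a) :
    ∀ {l l' : List R}, InsertBlock e l l' → prodVal μ pmul e l = prodVal μ pmul e l' := by
  have hrep : ∀ (k : ℕ) (acc : Quotient μ),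
      List.foldl pmul acc (List.replicate k (Quotient.mk μ e)) = acc := by
    intro k
    induction k with
    | zero => intro acc; rfl
    | succ n ih => intro acc; rw [List.replicate_succ, List.foldl_cons, honer, ih]
  rintro l l' (rfl | ⟨p, q, k, _, rfl, rfl⟩)
  · rfl
  · simp only [prodVal, List.map_append, List.foldl_append, List.map_replicate, hrep]

theorem insertBlock_ne_nil {R : Type*} (e : R) {l l' : List R}
    (h : InsertBlock e l l') (hl : l ≠ []) : l' ≠ [] := by
  rcases h with rfl | ⟨p, q, k, hk, rfl, rfl⟩
  · exact hl
  · intro hnil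
    simp only [List.append_eq_nil_iff, List.replicate_eq_nil_iff] at hnil
    omega

theorem condP_facts {R : Type*} (μ : Setoid R)
    (pmul : Quotient μ → Quotient μ → Quotient μ) (e : R)
    (honer : ∀ a, pmul a (Quotient.mk μ e) = a) :
    ∀ {ll ll' : List (List R)}, List.Forall₂ (InsertBlock e) ll ll' →
      (∀ l ∈ ll, l ≠ []) →
      (∀ l' ∈ ll', l' ≠ []) ∧
        ll.map (prodVal μ pmul e) = ll'.map (prodVal μ pmul e) := by
  intro ll ll' h
  induction h with
  | nil => exact fun _ => ⟨fun l hl => absurd hl List.not_mem_nil, rfl⟩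
  | @cons l l' t t' hib _ ih =>
      intro hne
      obtain ⟨h1, h2⟩ := ih (fun a ha => hne a (List.mem_cons_of_mem _ ha))
      refine ⟨?_, ?_⟩
      · intro a ha
        rcases List.mem_cons.mp ha with rfl | ha'
        · exact insertBlock_ne_nil e hib (hne l List.mem_cons_self)
        · exact h1 a ha'
      · rw [List.map_cons, List.map_cons, h2, prod_insertBlock μ pmul e honer hib]


/-- `λₑ*` is the smallest equivalence relation whose quotient is a
ring with identity the class of `e`. -/
theorem stmt12 {R : Type*} (S : Hyperring R) (e : R) (μ : Setoid R)
    (hring : ∃ padd pmul : Quotient μ → Quotient μ → Quotient μ,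
      (∀ x y : R, ∀ z ∈ S.add.op x y,
        padd (Quotient.mk μ x) (Quotient.mk μ y) = Quotient.mk μ z) ∧
      (∀ x y : R, ∀ z ∈ S.mul.op x y,
        pmul (Quotient.mk μ x) (Quotient.mk μ y) = Quotient.mk μ z) ∧
      (∀ a b c, padd (padd a b) c = padd a (padd b c)) ∧
      (∃ zero, (∀ a, padd zero a = a ∧ padd a zero = a) ∧
        ∀ a, ∃ b, padd a b = zero ∧ padd b a = zero) ∧
      (∀ a b c, pmul (pmul a b) c = pmul a (pmul b c)) ∧
      (∀ a b c, pmul a (padd b c) = padd (pmul a b) (pmul a c)) ∧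
      (∀ a b c, pmul (padd a b) c = padd (pmul a c) (pmul b c)) ∧
      (∀ a, pmul (Quotient.mk μ e) a = a ∧ pmul a (Quotient.mk μ e) = a)) :
    ∀ x y : R, Relation.TransGen (S.lam e) x y → μ.r x y := by
  obtain ⟨padd, pmul, hadd, hmul, haddassoc, ⟨z0, hz0, hneg⟩, hmulassoc, hld, hrd, hone⟩ := hring
  -- cancellation in the additive group
  have cancel_left : ∀ c x y, padd c x = padd c y → x = y := by
    intro c x y h
    obtain ⟨d, _, hd2⟩ := hneg c
    have := congrArg (padd d) h
    rwa [← haddassoc, ← haddassoc, hd2, (hz0 x).1, (hz0 y).1] at this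
  have cancel_right : ∀ c x y, padd x c = padd y c → x = y := by
    intro c x y h
    obtain ⟨d, hd1, _⟩ := hneg c
    have := congrArg (fun t => padd t d) h
    rwa [haddassoc, haddassoc, hd1, (hz0 x).2, (hz0 y).2] at this
  -- commutativity of addition in the quotient ring
  have two_mul : ∀ c, pmul (padd (Quotient.mk μ e) (Quotient.mk μ e)) c = padd c c := by
    intro c; rw [hrd, (hone c).1]
  have add_comm : ∀ a b, padd a b = padd b a := by
    intro a b
    have h1 : pmul (padd (Quotient.mk μ e) (Quotient.mk μ e)) (padd a b)
        = padd (padd a b) (padd a b) := two_mul _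
    have h2 : pmul (padd (Quotient.mk μ e) (Quotient.mk μ e)) (padd a b)
        = padd (padd a a) (padd b b) := by rw [hld, two_mul, two_mul]
    have h3 : padd (padd a b) (padd a b) = padd (padd a a) (padd b b) := h1 ▸ h2
    rw [haddassoc, haddassoc] at h3
    have h4 := cancel_left a _ _ h3
    rw [← haddassoc, ← haddassoc] at h4
    exact (cancel_right b _ _ h4).symm
  have rcomm : ∀ z x y, padd (padd z x) y = padd (padd z y) x := by
    intro z x y; rw [haddassoc, haddassoc, add_comm x y]
  -- the key step: each single λₑ step is contained in μ
  have key : ∀ x y : R, S.lam e x y → Quotient.mk μ x = Quotient.mk μ y := by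
    intro x y h
    rcases h with ⟨m, _, ll, ll', _, hv, hcond, hmem⟩ | ⟨ll, ll', hv, hperm, hx, hy⟩
    · -- λ^e_× case
      obtain ⟨h1, h2⟩ := condP_facts μ pmul e (fun a => (hone a).2) hcond hv.2
      have hv' : S.ValidExpr ll' := by
        refine ⟨?_, h1⟩
        intro h0
        subst h0
        unfold Hyperring.CondP at hcond
        rw [List.forall₂_nil_right_iff] at hcond
        exact hv.1 hcond
      have hsum : sumVal μ padd pmul z0 e ll = sumVal μ padd pmul z0 e ll' := by
        unfold sumVal; rw [h2]
      rcases hmem with ⟨hx, hy⟩ | ⟨hx, hy⟩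
      · rw [SOP_spec S μ padd pmul e z0 hadd hmul (fun a => (hone a).1)
            (fun a => (hz0 a).1) ll hv x hx,
          SOP_spec S μ padd pmul e z0 hadd hmul (fun a => (hone a).1)
            (fun a => (hz0 a).1) ll' hv' y hy, hsum]
      · rw [SOP_spec S μ padd pmul e z0 hadd hmul (fun a => (hone a).1)
            (fun a => (hz0 a).1) ll' hv' x hx,
          SOP_spec S μ padd pmul e z0 hadd hmul (fun a => (hone a).1)
            (fun a => (hz0 a).1) ll hv y hy, hsum]
    · -- α₊ case
      have hv' : S.ValidExpr ll' := by
        refine ⟨fun h0 => hv.1 (List.Perm.eq_nil (h0 ▸ hperm)), fun l hl => hv.2 l (hperm.mem_iff.mpr hl)⟩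
      have hx' := SOP_spec S μ padd pmul e z0 hadd hmul (fun a => (hone a).1)
        (fun a => (hz0 a).1) ll hv x hx
      have hy' := SOP_spec S μ padd pmul e z0 hadd hmul (fun a => (hone a).1)
        (fun a => (hz0 a).1) ll' hv' y hy
      have hpm : (ll.map (prodVal μ pmul e)).Perm (ll'.map (prodVal μ pmul e)) :=
        hperm.map _
      have : sumVal μ padd pmul z0 e ll = sumVal μ padd pmul z0 e ll' :=
        hpm.foldl_eq' (fun a _ b _ z => rcomm z a b) z0
      rw [hx', hy', this]
  -- conclude by induction on the transitive closure
  intro x y h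
  induction h with
  | single h' => exact Quotient.eq''.mp (key _ _ h')
  | tail _ h' ih => exact μ.trans ih (Quotient.eq''.mp (key _ _ h'))
end

section
/- Let (R, +, ·) be a hyperring, e ∈ R, and for x ∈ R let P(x) = {y ∈ R : x λₑ y}. Then the following are equivalent: (1) λₑ is transitive; (2) λₑ*(x) = P(x) for every x ∈ R; (3) P(x) is a λₑ-part of R for every x ∈ R. -/
namespace Hyperring

variable {R : Type*}

lemma sop_empty_left (h : Hyperop R) (B : Set R) : h.sop ∅ B = ∅ := by
  simp [Hyperop.sop]

lemma sop_empty_right (h : Hyperop R) (A : Set R) : h.sop A ∅ = ∅ := by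
  simp [Hyperop.sop]

lemma setFold_empty (h : Hyperop R) (L : List (Set R)) : h.setFold ∅ L = ∅ := by
  induction L with
  | nil => rfl
  | cons B t ih => simp [Hyperop.setFold, sop_empty_left, ih]

lemma setFold_mem_empty (h : Hyperop R) (A : Set R) (L : List (Set R))
    (hL : ∅ ∈ L) : h.setFold A L = ∅ := by
  induction L generalizing A with
  | nil => cases hL
  | cons B t ih =>
    rcases List.mem_cons.mp hL with hB | ht
    · simp only [Hyperop.setFold, ← hB, sop_empty_right, setFold_empty]
    · exact ih _ ht

lemma valid_of_SOP_nonempty (S : Hyperring R) {ll : List (List R)} {w : R}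
    (hw : w ∈ S.SOP ll) : S.ValidExpr ll := by
  constructor
  · rintro rfl; exact hw.elim
  · intro l hl
    rintro rfl
    cases ll with
    | nil => exact hw.elim
    | cons a t =>
      simp only [SOP] at hw
      rcases List.mem_cons.mp hl with rfl | hl
      · rw [show S.mul.listProd ([] : List R) = ∅ from rfl, setFold_empty] at hw
        exact hw.elim
      · have : (∅ : Set R) ∈ t.map S.mul.listProd := by
          exact List.mem_map.mpr ⟨[], hl, rfl⟩
        rw [setFold_mem_empty _ _ _ this] at hw
        exact hw.elim

/-- Key step lemma: elements of related expressions are `lam`-related. -/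
lemma lam_of_perm (S : Hyperring R) (e : R) {ll ll' : List (List R)} {z w : R}
    (hv : S.ValidExpr ll) (hp : ll.Perm ll') (hz : z ∈ S.SOP ll) (hw : w ∈ S.SOP ll') :
    S.lam e z w := Or.inr ⟨ll, ll', hv, hp, hz, hw⟩

lemma lam_of_condP (S : Hyperring R) (e : R) {ll ll' : List (List R)} {z w : R}
    (hv : S.ValidExpr ll) (hc : S.CondP e ll ll' ∨ S.CondP e ll' ll)
    (hz : z ∈ S.SOP ll) (hw : w ∈ S.SOP ll') : S.lam e z w := by
  rcases hc with hc | hc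
  · refine Or.inl ⟨ll.length, ?_, ll, ll', rfl, hv, hc, Or.inl ⟨hz, hw⟩⟩
    have := hv.1
    cases ll with
    | nil => exact absurd rfl this
    | cons a t => simp
  · have hv' : S.ValidExpr ll' := S.valid_of_SOP_nonempty hw
    refine Or.inl ⟨ll'.length, ?_, ll', ll, rfl, hv', hc, Or.inr ⟨hz, hw⟩⟩
    have := hv'.1
    cases ll' with
    | nil => exact absurd rfl this
    | cons a t => simp

end Hyperring

/-- transitivity of `λₑ` is equivalent to `λₑ*(x) = P(x)` for all
`x`, and to every `P(x)` being a `λₑ`-part. -/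
theorem stmt14 {R : Type*} (S : Hyperring R) (e : R) :
    (Transitive (S.lam e) ↔
      ∀ x : R, {y | Relation.TransGen (S.lam e) x y} = {y | S.lam e x y}) ∧
    ((∀ x : R, {y | Relation.TransGen (S.lam e) x y} = {y | S.lam e x y}) ↔
      ∀ x : R, S.IsLamPart e {y | S.lam e x y}) := by
  constructor
  · constructor
    · intro hT x
      ext y
      simp only [Set.mem_setOf_eq]
      constructor
      · intro h
        induction h with
        | single h => exact h
        | tail _ h ih => exact hT ih h
      · exact Relation.TransGen.single
    · intro h x y z hxy hyz
      have : Relation.TransGen (S.lam e) x z :=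
        Relation.TransGen.tail (Relation.TransGen.single hxy) hyz
      have := (h x).le this
      exact this
  · constructor
    · intro h2 x
      have hlam : ∀ a b c, S.lam e a b → S.lam e b c → S.lam e a c := by
        intro a b c hab hbc
        exact (h2 a).le (Relation.TransGen.tail (Relation.TransGen.single hab) hbc)
      constructor
      · rintro ll ll' hv hp ⟨z, hz, hzx⟩ w hw
        exact hlam x z w hzx (S.lam_of_perm e hv hp hz hw)
      · rintro ll ll' hv hc ⟨z, hz, hzx⟩ w hw
        exact hlam x z w hzx (S.lam_of_condP e hv hc hz hw)
    · intro h3 x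
      ext y
      simp only [Set.mem_setOf_eq]
      constructor
      · intro h
        induction h with
        | single h => exact h
        | tail _ hyz ih =>
          rename_i b c _
          rcases hyz with hT | hA
          · rcases hT with ⟨m, _, a, bb, _, hva, hc, hmem⟩
            rcases hmem with ⟨hb, hcm⟩ | ⟨hb, hcm⟩
            · exact (h3 x).2 a bb hva (Or.inl hc) ⟨b, hb, ih⟩ hcm
            · have hvb : S.ValidExpr bb := S.valid_of_SOP_nonempty hb
              exact (h3 x).2 bb a hvb (Or.inr hc) ⟨b, hb, ih⟩ hcm
          · rcases hA with ⟨ll, ll', hv, hp, hb, hcm⟩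
            exact (h3 x).1 ll ll' hv hp ⟨b, hb, ih⟩ hcm
      · exact Relation.TransGen.single
end

section
/- Let (R, +, ·) be a λₑ-strong hyperring and M a nonempty subset of R. Then M·Dₑ(R) = Dₑ(R)·M = φₑ⁻¹(φₑ(M)), where Dₑ(R) = φₑ⁻¹(1) is the preimage of the identity of R/λₑ* under the canonical projection φₑ. -/
namespace Hyperring

lemma lam_step_right {R : Type*} (S : Hyperring R) (e x z : R)
    (h : z ∈ S.mul.op x e) : S.lam e x z ∧ S.lam e z x := by
  have hvalid : S.ValidExpr [[x]] := ⟨by simp, by intro l hl; simp at hl; subst hl; simp⟩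
  have hcond : S.CondP e [[x]] [[x, e]] := by
    refine List.Forall₂.cons ?_ List.Forall₂.nil
    exact Or.inr ⟨[x], [], 1, le_refl 1, by simp, by simp⟩
  have hx : x ∈ S.SOP [[x]] := by
    simp [Hyperring.SOP, Hyperop.setFold, Hyperop.listProd, Hyperop.foldl]
  have hz : z ∈ S.SOP [[x, e]] := by
    simp [Hyperring.SOP, Hyperop.setFold, Hyperop.listProd, Hyperop.foldl]
    exact h
  exact ⟨Or.inl ⟨1, le_refl 1, [[x]], [[x, e]], rfl, hvalid, hcond, Or.inl ⟨hx, hz⟩⟩,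
    Or.inl ⟨1, le_refl 1, [[x]], [[x, e]], rfl, hvalid, hcond, Or.inr ⟨hz, hx⟩⟩⟩

lemma lam_step_left {R : Type*} (S : Hyperring R) (e x z : R)
    (h : z ∈ S.mul.op e x) : S.lam e x z ∧ S.lam e z x := by
  have hvalid : S.ValidExpr [[x]] := ⟨by simp, by intro l hl; simp at hl; subst hl; simp⟩
  have hcond : S.CondP e [[x]] [[e, x]] := by
    refine List.Forall₂.cons ?_ List.Forall₂.nil
    exact Or.inr ⟨[], [x], 1, le_refl 1, by simp, by simp⟩
  have hx : x ∈ S.SOP [[x]] := by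
    simp [Hyperring.SOP, Hyperop.setFold, Hyperop.listProd, Hyperop.foldl]
  have hz : z ∈ S.SOP [[e, x]] := by
    simp [Hyperring.SOP, Hyperop.setFold, Hyperop.listProd, Hyperop.foldl]
    exact h
  exact ⟨Or.inl ⟨1, le_refl 1, [[x]], [[e, x]], rfl, hvalid, hcond, Or.inl ⟨hx, hz⟩⟩,
    Or.inl ⟨1, le_refl 1, [[x]], [[e, x]], rfl, hvalid, hcond, Or.inr ⟨hz, hx⟩⟩⟩

end Hyperring

/-- in a `λₑ`-strong hyperring, `M·Dₑ(R) = Dₑ(R)·M = φₑ⁻¹(φₑ(M))`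
for every nonempty `M`, where `Dₑ(R) = φₑ⁻¹(1)` is the `λₑ*`-class of `e`. -/
theorem stmt16 {R : Type*} (S : Hyperring R) (e : R) (hstrong : S.LamStrong e)
    (M : Set R) (hM : M.Nonempty) :
    S.mul.sop M {d | Relation.TransGen (S.lam e) d e} =
      {x | ∃ m ∈ M, Relation.TransGen (S.lam e) x m} ∧
    S.mul.sop {d | Relation.TransGen (S.lam e) d e} M =
      {x | ∃ m ∈ M, Relation.TransGen (S.lam e) x m} := by
  obtain ⟨hstr, hinvR, hinvL⟩ := hstrong
  have hRe : ∀ x z : R, z ∈ S.mul.op x e → Relation.TransGen (S.lam e) z x :=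
    fun x z h => Relation.TransGen.single (S.lam_step_right e x z h).2
  have hLe : ∀ x z : R, z ∈ S.mul.op e x → Relation.TransGen (S.lam e) z x :=
    fun x z h => Relation.TransGen.single (S.lam_step_left e x z h).2
  constructor
  · ext x
    simp only [Hyperop.sop, Set.mem_iUnion, Set.mem_setOf_eq, exists_prop]
    constructor
    · rintro ⟨m, hm, d, hTde, hx⟩
      obtain ⟨z, hzde, hzee⟩ := (hstr d e hTde).1
      have hd : d ∈ S.mul.op z e := hinvR d z hzde
      have hx1 : x ∈ S.mul.sop (S.mul.op m z) {e} := by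
        rw [S.mul_assoc]
        simp only [Hyperop.sop, Set.mem_iUnion, Set.mem_singleton_iff, exists_prop,
          exists_eq_left]
        exact ⟨d, hd, hx⟩
      obtain ⟨w, hw, hxw⟩ : ∃ w ∈ S.mul.op m z, x ∈ S.mul.op w e := by
        simpa only [Hyperop.sop, Set.mem_iUnion, Set.mem_singleton_iff, exists_prop,
          exists_eq_left] using hx1
      have hw1 : w ∈ S.mul.sop (S.mul.op m e) {e} := by
        rw [S.mul_assoc]
        simp only [Hyperop.sop, Set.mem_iUnion, Set.mem_singleton_iff, exists_prop,
          exists_eq_left]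
        exact ⟨z, hzee, hw⟩
      obtain ⟨u, hu, hwu⟩ : ∃ u ∈ S.mul.op m e, w ∈ S.mul.op u e := by
        simpa only [Hyperop.sop, Set.mem_iUnion, Set.mem_singleton_iff, exists_prop,
          exists_eq_left] using hw1
      exact ⟨m, hm, (hRe w x hxw).trans ((hRe u w hwu).trans (hRe m u hu))⟩
    · rintro ⟨m, hm, hxm⟩
      obtain ⟨z, hzxe, hzme⟩ := (hstr x m hxm).1
      have hx' : x ∈ S.mul.op z e := hinvR x z hzxe
      have hx1 : x ∈ S.mul.sop {m} (S.mul.op e e) := by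
        rw [← S.mul_assoc]
        simp only [Hyperop.sop, Set.mem_iUnion, Set.mem_singleton_iff, exists_prop,
          exists_eq_left]
        exact ⟨z, hzme, hx'⟩
      obtain ⟨d, hdee, hxmd⟩ : ∃ d ∈ S.mul.op e e, x ∈ S.mul.op m d := by
        simpa only [Hyperop.sop, Set.mem_iUnion, Set.mem_singleton_iff, exists_prop,
          exists_eq_left] using hx1
      exact ⟨m, hm, d, hRe e d hdee, hxmd⟩
  · ext x
    simp only [Hyperop.sop, Set.mem_iUnion, Set.mem_setOf_eq, exists_prop]
    constructor
    · rintro ⟨d, hTde, m, hm, hx⟩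
      obtain ⟨z, hzed, hzee⟩ := (hstr d e hTde).2
      have hd : d ∈ S.mul.op e z := hinvL d z hzed
      have hx1 : x ∈ S.mul.sop {e} (S.mul.op z m) := by
        rw [← S.mul_assoc]
        simp only [Hyperop.sop, Set.mem_iUnion, Set.mem_singleton_iff, exists_prop,
          exists_eq_left]
        exact ⟨d, hd, hx⟩
      obtain ⟨w, hw, hxw⟩ : ∃ w ∈ S.mul.op z m, x ∈ S.mul.op e w := by
        simpa only [Hyperop.sop, Set.mem_iUnion, Set.mem_singleton_iff, exists_prop,
          exists_eq_left] using hx1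
      have hw1 : w ∈ S.mul.sop {e} (S.mul.op e m) := by
        rw [← S.mul_assoc]
        simp only [Hyperop.sop, Set.mem_iUnion, Set.mem_singleton_iff, exists_prop,
          exists_eq_left]
        exact ⟨z, hzee, hw⟩
      obtain ⟨u, hu, hwu⟩ : ∃ u ∈ S.mul.op e m, w ∈ S.mul.op e u := by
        simpa only [Hyperop.sop, Set.mem_iUnion, Set.mem_singleton_iff, exists_prop,
          exists_eq_left] using hw1
      exact ⟨m, hm, (hLe w x hxw).trans ((hLe u w hwu).trans (hLe m u hu))⟩
    · rintro ⟨m, hm, hxm⟩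
      obtain ⟨z, hzex, hzem⟩ := (hstr x m hxm).2
      have hx' : x ∈ S.mul.op e z := hinvL x z hzex
      have hx1 : x ∈ S.mul.sop (S.mul.op e e) {m} := by
        rw [S.mul_assoc]
        simp only [Hyperop.sop, Set.mem_iUnion, Set.mem_singleton_iff, exists_prop,
          exists_eq_left]
        exact ⟨z, hzem, hx'⟩
      obtain ⟨d, hdee, hxdm⟩ : ∃ d ∈ S.mul.op e e, x ∈ S.mul.op d m := by
        simpa only [Hyperop.sop, Set.mem_iUnion, Set.mem_singleton_iff, exists_prop,
          exists_eq_left] using hx1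
      exact ⟨d, hRe e d hdee, m, hm, hxdm⟩
end

section
/- If (R, +, ·) is a λₑ-strong hyperring, then the relation λₑ is transitive (hence λₑ = λₑ*). -/
/-- in a `λₑ`-strong hyperring the relation `λₑ` is transitive. -/
theorem stmt18 {R : Type*} (S : Hyperring R) (e : R) (hstrong : S.LamStrong e) :
    Transitive (S.lam e) := by
  intro x y z hxy hyz
  obtain ⟨⟨w, hwx, hwz⟩, -⟩ :=
    hstrong.1 x z (Relation.TransGen.tail (Relation.TransGen.single hxy) hyz)
  have hx : x ∈ S.mul.op w e := hstrong.2.1 x w hwx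
  have hz : z ∈ S.mul.op w e := hstrong.2.1 z w hwz
  have hSOP : S.SOP [[w, e]] = S.mul.op w e := by
    simp [Hyperring.SOP, Hyperop.setFold, Hyperop.listProd, Hyperop.foldl]
  left
  refine ⟨1, le_refl 1, [[w, e]], [[w, e]], rfl, ⟨by simp, by simp⟩,
    List.Forall₂.cons (Or.inl rfl) List.Forall₂.nil, Or.inl ?_⟩
  rw [hSOP]
  exact ⟨hx, hz⟩
end
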